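/- The subspace I := span_𝔽{ŝ_{0̄,3k}−ŝ_{1̄,3k}, ŝ_{0̄,3k}−ŝ_{2̄,3k}, ŝ_{1̄,3k}−ŝ_{2̄,3k} : k ∈ ℤ₊} is an ideal of the algebra Ĥ (i.e. Ĥ·I ⊆ I), and I is invariant under the linear map f̂. -/

import Mathlib

namespace HatAlgebra

/-- Basis of the algebra `Ĥ`: vectors `â i` for `i : ℤ`, `ŝ_{0̄,j}` for `j` a positive
integer, and `ŝ_{1̄,3k}`, `ŝ_{2̄,3k}` for `k` a positive integer. -/
inductive HatB : Type
  | a : ℤ → HatB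
  | s0 : ℕ+ → HatB
  | s1 : ℕ+ → HatB
  | s2 : ℕ+ → HatB
  deriving DecidableEq

variable (F : Type*) [Field F]

/-- The underlying vector space of `Ĥ`: the free `F`-vector space on `HatB`. -/
abbrev HatH : Type _ := HatB →₀ F

/-- The basis vector `â i`. -/
noncomputable def aHat (i : ℤ) : HatH F := Finsupp.single (HatB.a i) 1

/-- The element `ŝ_{r̄,j}` of `Ĥ`, with the conventions `ŝ_{r̄,0} = 0` and
`ŝ_{1̄,j} = ŝ_{0̄,j} = ŝ_{2̄,j}` whenever `3 ∤ j`. -/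
noncomputable def sHat (r : ZMod 3) (j : ℕ) : HatH F :=
  if h : j = 0 then 0
  else if h3 : 3 ∣ j then
    if r = 0 then Finsupp.single (HatB.s0 ⟨j, Nat.pos_of_ne_zero h⟩) 1
    else if r = 1 then
      Finsupp.single (HatB.s1 ⟨j / 3,
        Nat.div_pos (Nat.le_of_dvd (Nat.pos_of_ne_zero h) h3) (by norm_num)⟩) 1
    else
      Finsupp.single (HatB.s2 ⟨j / 3,
        Nat.div_pos (Nat.le_of_dvd (Nat.pos_of_ne_zero h) h3) (by norm_num)⟩) 1
  else Finsupp.single (HatB.s0 ⟨j, Nat.pos_of_ne_zero h⟩) 1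

/-- The operation `∗`: `(−1) ∗ 1̄ = −1`, `(−1) ∗ 2̄ = 1`, `0 ∗ t̄ = 0`. -/
def hatStar (x : ℤ) (t : ZMod 3) : ℤ :=
  if x = 0 then 0 else if t = 1 then -1 else if t = 2 then 1 else 0

/-- The coefficient `(δ_{ī,r̄} − 1) ∗ (ī − r̄)` appearing in rule (Ĥ2). -/
def hatC (i r : ZMod 3) : ℤ := hatStar ((if i = r then 1 else 0) - 1) (i - r)

/-- Rule (Ĥ2): the product `â_i · ŝ_{r̄,j}`. -/
noncomputable def aMulS (i : ℤ) (r : ZMod 3) (j : ℕ) : HatH F :=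
  (-2 : F) • aHat F i + (aHat F (i - (j : ℤ)) + aHat F (i + (j : ℤ))) - sHat F r j
    - (hatC (i : ZMod 3) r : F) • (sHat F (r - 1) j - sHat F (r + 1) j)

/-- `ŝ_{0̄,n} + ŝ_{1̄,n} + ŝ_{2̄,n}`. -/
noncomputable def sSum (n : ℕ) : HatH F := sHat F 0 n + sHat F 1 n + sHat F 2 n

/-- For `r ≠ t` in `ℤ/3ℤ`, the signed sum `ŝ_{r̄,n} + ŝ_{t̄,n} − ŝ_{m̄,n}` where `m̄`
is the third residue class (appearing in rules (Ĥ5), (Ĥ6), (Ĥ7)). -/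
noncomputable def sT (r t : ZMod 3) (n : ℕ) : HatH F :=
  sHat F r n + sHat F t n - sHat F (-(r + t)) n

/-- Rules (Ĥ3)–(Ĥ7): the product `ŝ_{r̄,i} · ŝ_{t̄,j}`. -/
noncomputable def sMulS (r : ZMod 3) (i : ℕ) (t : ZMod 3) (j : ℕ) : HatH F :=
  if 3 ∣ i ∧ 3 ∣ j then
    if r = t then
      (2 : F) • (sHat F r i + sHat F r j) - (sHat F r (Nat.dist i j) + sHat F r (i + j))
    else
      (2 : F) • (sT F r t i + sT F r t j) - (sT F r t (Nat.dist i j) + sT F r t (i + j))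
  else
    (2 : F) • (sHat F r i + sHat F t j) - (2 : F) • (sSum F (Nat.dist i j) + sSum F (i + j))

/-- The product of `Ĥ` on basis vectors, given by rules (Ĥ1)–(Ĥ7) (extended
symmetrically, since the product is commutative). -/
noncomputable def mulB : HatB → HatB → HatH F
  | .a i, .a j => (-2 : F) • (aHat F i + aHat F j) + sHat F (i : ZMod 3) (i - j).natAbs
  | .a i, .s0 j => aMulS F i 0 (j : ℕ)
  | .s0 j, .a i => aMulS F i 0 (j : ℕ)
  | .a i, .s1 k => aMulS F i 1 (3 * (k : ℕ))
  | .s1 k, .a i => aMulS F i 1 (3 * (k : ℕ))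
  | .a i, .s2 k => aMulS F i 2 (3 * (k : ℕ))
  | .s2 k, .a i => aMulS F i 2 (3 * (k : ℕ))
  | .s0 i, .s0 j => sMulS F 0 (i : ℕ) 0 (j : ℕ)
  | .s0 i, .s1 k => sMulS F 0 (i : ℕ) 1 (3 * (k : ℕ))
  | .s1 k, .s0 i => sMulS F 0 (i : ℕ) 1 (3 * (k : ℕ))
  | .s0 i, .s2 k => sMulS F 0 (i : ℕ) 2 (3 * (k : ℕ))
  | .s2 k, .s0 i => sMulS F 0 (i : ℕ) 2 (3 * (k : ℕ))
  | .s1 h, .s1 k => sMulS F 1 (3 * (h : ℕ)) 1 (3 * (k : ℕ))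
  | .s1 h, .s2 k => sMulS F 1 (3 * (h : ℕ)) 2 (3 * (k : ℕ))
  | .s2 k, .s1 h => sMulS F 1 (3 * (h : ℕ)) 2 (3 * (k : ℕ))
  | .s2 h, .s2 k => sMulS F 2 (3 * (h : ℕ)) 2 (3 * (k : ℕ))

/-- The commutative bilinear product of `Ĥ`, as a bilinear map. -/
noncomputable def hatMul : HatH F →ₗ[F] HatH F →ₗ[F] HatH F :=
  Finsupp.lift (HatH F →ₗ[F] HatH F) F HatB fun x => Finsupp.lift (HatH F) F HatB (mulB F x)

/-- The product of two elements of `Ĥ`. -/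
noncomputable def hmul (x y : HatH F) : HatH F := hatMul F x y


/-- The linear map `f̂`, determined on basis vectors by `â_i ↦ â_{−i+1}`,
`ŝ_{0̄,j} ↦ ŝ_{0̄,j}` for `3 ∤ j`, `ŝ_{0̄,3k} ↦ ŝ_{1̄,3k}`, `ŝ_{1̄,3k} ↦ ŝ_{0̄,3k}`,
`ŝ_{2̄,3k} ↦ ŝ_{2̄,3k}`. -/
noncomputable def fHatB : HatB → HatH F
  | .a i => aHat F (-i + 1)
  | .s0 j => sHat F 1 (j : ℕ)
  | .s1 k => sHat F 0 (3 * (k : ℕ))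
  | .s2 k => sHat F 2 (3 * (k : ℕ))

noncomputable def fHat : HatH F →ₗ[F] HatH F := Finsupp.lift (HatH F) F HatB (fHatB F)

/-- The subspace `I := span{ŝ_{0̄,3k}−ŝ_{1̄,3k}, ŝ_{0̄,3k}−ŝ_{2̄,3k}, ŝ_{1̄,3k}−ŝ_{2̄,3k} : k ∈ ℤ₊}`. -/
noncomputable def idealI : Submodule F (HatH F) :=
  Submodule.span F {x | ∃ k : ℕ, 0 < k ∧
    (x = sHat F 0 (3 * k) - sHat F 1 (3 * k) ∨
     x = sHat F 0 (3 * k) - sHat F 2 (3 * k) ∨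
     x = sHat F 1 (3 * k) - sHat F 2 (3 * k))}


lemma zmod3_cases : ∀ x : ZMod 3, x = 0 ∨ x = 1 ∨ x = 2 := by decide

lemma sHat_not_dvd (n : ℕ) (r t : ZMod 3) (h : ¬ 3 ∣ n) : sHat F r n = sHat F t n := by
  unfold sHat
  have hn : n ≠ 0 := by rintro rfl; exact h ⟨0, rfl⟩
  rw [dif_neg hn, dif_neg hn, dif_neg h, dif_neg h]

lemma sHat0_eq (k : ℕ) (hk : 0 < k) :
    sHat F 0 (3 * k) = Finsupp.single (HatB.s0 ⟨3 * k, by omega⟩) 1 := by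
  unfold sHat
  rw [dif_neg (by omega), dif_pos ⟨k, rfl⟩, if_pos rfl]

lemma sHat1_eq (k : ℕ) (hk : 0 < k) :
    sHat F 1 (3 * k) = Finsupp.single (HatB.s1 ⟨k, hk⟩) 1 := by
  unfold sHat
  rw [dif_neg (by omega), dif_pos ⟨k, rfl⟩, if_neg (by decide), if_pos rfl]
  simp [Nat.mul_div_cancel_left]

lemma sHat2_eq (k : ℕ) (hk : 0 < k) :
    sHat F 2 (3 * k) = Finsupp.single (HatB.s2 ⟨k, hk⟩) 1 := by
  unfold sHat
  rw [dif_neg (by omega), dif_pos ⟨k, rfl⟩, if_neg (by decide), if_neg (by decide)]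
  simp [Nat.mul_div_cancel_left]

lemma sdiff_mem (n : ℕ) (r t : ZMod 3) : sHat F r n - sHat F t n ∈ idealI F := by
  by_cases h3 : 3 ∣ n
  · rcases h3 with ⟨k, rfl⟩
    rcases Nat.eq_zero_or_pos k with rfl | hk
    · simp [sHat]
    · have mem : ∀ x ∈ {x | ∃ k : ℕ, 0 < k ∧
          (x = sHat F 0 (3 * k) - sHat F 1 (3 * k) ∨
           x = sHat F 0 (3 * k) - sHat F 2 (3 * k) ∨
           x = sHat F 1 (3 * k) - sHat F 2 (3 * k))}, x ∈ idealI F :=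
        fun x hx => Submodule.subset_span hx
      rcases zmod3_cases r with rfl | rfl | rfl <;> rcases zmod3_cases t with rfl | rfl | rfl
      · simp only [sub_self]; exact (idealI F).zero_mem
      · exact mem _ ⟨k, hk, Or.inl rfl⟩
      · exact mem _ ⟨k, hk, Or.inr (Or.inl rfl)⟩
      · rw [show sHat F 1 (3*k) - sHat F 0 (3*k) = -(sHat F 0 (3*k) - sHat F 1 (3*k)) by abel]
        exact neg_mem (mem _ ⟨k, hk, Or.inl rfl⟩)
      · simp only [sub_self]; exact (idealI F).zero_mem
      · exact mem _ ⟨k, hk, Or.inr (Or.inr rfl)⟩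
      · rw [show sHat F 2 (3*k) - sHat F 0 (3*k) = -(sHat F 0 (3*k) - sHat F 2 (3*k)) by abel]
        exact neg_mem (mem _ ⟨k, hk, Or.inr (Or.inl rfl)⟩)
      · rw [show sHat F 2 (3*k) - sHat F 1 (3*k) = -(sHat F 1 (3*k) - sHat F 2 (3*k)) by abel]
        exact neg_mem (mem _ ⟨k, hk, Or.inr (Or.inr rfl)⟩)
      · simp only [sub_self]; exact (idealI F).zero_mem
  · rw [sHat_not_dvd F n r t h3, sub_self]
    exact (idealI F).zero_mem

lemma aMulS_diff_mem (i : ℤ) (r t : ZMod 3) (j : ℕ) :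
    aMulS F i r j - aMulS F i t j ∈ idealI F := by
  have h : aMulS F i r j - aMulS F i t j =
      -(sHat F r j - sHat F t j)
      - (hatC (i : ZMod 3) r : F) • (sHat F (r - 1) j - sHat F (r + 1) j)
      + (hatC (i : ZMod 3) t : F) • (sHat F (t - 1) j - sHat F (t + 1) j) := by
    unfold aMulS; module
  rw [h]
  exact add_mem (sub_mem (neg_mem (sdiff_mem F j r t))
    (Submodule.smul_mem _ _ (sdiff_mem F j (r - 1) (r + 1))))
    (Submodule.smul_mem _ _ (sdiff_mem F j (t - 1) (t + 1)))

lemma sMulS_comm (r : ZMod 3) (i : ℕ) (t : ZMod 3) (j : ℕ) :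
    sMulS F r i t j = sMulS F t j r i := by
  unfold sMulS
  by_cases hij : 3 ∣ i ∧ 3 ∣ j
  · rw [if_pos hij, if_pos (⟨hij.2, hij.1⟩ : 3 ∣ j ∧ 3 ∣ i)]
    by_cases hrt : r = t
    · subst hrt
      rw [if_pos rfl, if_pos rfl, Nat.dist_comm j i, add_comm j i]
      module
    · rw [if_neg hrt, if_neg (fun h => hrt h.symm)]
      unfold sT
      rw [add_comm t r, Nat.dist_comm j i, add_comm j i]
      module
  · rw [if_neg hij, if_neg (fun h => hij ⟨h.2, h.1⟩)]
    unfold sSum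
    rw [Nat.dist_comm j i, add_comm j i]
    module

lemma sMulS_diff_mem (u : ZMod 3) (i : ℕ) (r t : ZMod 3) (j : ℕ) :
    sMulS F u i r j - sMulS F u i t j ∈ idealI F := by
  by_cases hrt : r = t
  · subst hrt; rw [sub_self]; exact (idealI F).zero_mem
  by_cases hij : 3 ∣ i ∧ 3 ∣ j
  · by_cases hur : u = r
    · subst hur
      have h : sMulS F u i u j - sMulS F u i t j =
          (2 : F) • ((sHat F (-(u + t)) i - sHat F t i) + (sHat F (-(u + t)) j - sHat F t j))
          - ((sHat F (-(u + t)) (Nat.dist i j) - sHat F t (Nat.dist i j))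
            + (sHat F (-(u + t)) (i + j) - sHat F t (i + j))) := by
        unfold sMulS
        rw [if_pos hij, if_pos hij, if_pos rfl, if_neg hrt]
        unfold sT; module
      rw [h]
      exact sub_mem (Submodule.smul_mem _ _ (add_mem (sdiff_mem F i _ _) (sdiff_mem F j _ _)))
        (add_mem (sdiff_mem F _ _ _) (sdiff_mem F _ _ _))
    · by_cases hut : u = t
      · subst hut
        have h : sMulS F u i r j - sMulS F u i u j =
            (2 : F) • ((sHat F r i - sHat F (-(u + r)) i) + (sHat F r j - sHat F (-(u + r)) j))
            - ((sHat F r (Nat.dist i j) - sHat F (-(u + r)) (Nat.dist i j))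
              + (sHat F r (i + j) - sHat F (-(u + r)) (i + j))) := by
          unfold sMulS
          rw [if_pos hij, if_pos hij, if_neg hur, if_pos rfl]
          unfold sT; module
        rw [h]
        exact sub_mem (Submodule.smul_mem _ _ (add_mem (sdiff_mem F i _ _) (sdiff_mem F j _ _)))
          (add_mem (sdiff_mem F _ _ _) (sdiff_mem F _ _ _))
      · have h : sMulS F u i r j - sMulS F u i t j =
            (2 : F) • (((sHat F r i - sHat F t i) - (sHat F (-(u + r)) i - sHat F (-(u + t)) i))
              + ((sHat F r j - sHat F t j) - (sHat F (-(u + r)) j - sHat F (-(u + t)) j)))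
            - (((sHat F r (Nat.dist i j) - sHat F t (Nat.dist i j))
                - (sHat F (-(u + r)) (Nat.dist i j) - sHat F (-(u + t)) (Nat.dist i j)))
              + ((sHat F r (i + j) - sHat F t (i + j))
                - (sHat F (-(u + r)) (i + j) - sHat F (-(u + t)) (i + j)))) := by
          unfold sMulS
          rw [if_pos hij, if_pos hij, if_neg hur, if_neg hut]
          unfold sT; module
        rw [h]
        exact sub_mem (Submodule.smul_mem _ _ (add_mem
            (sub_mem (sdiff_mem F i _ _) (sdiff_mem F i _ _))
            (sub_mem (sdiff_mem F j _ _) (sdiff_mem F j _ _))))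
          (add_mem (sub_mem (sdiff_mem F _ _ _) (sdiff_mem F _ _ _))
            (sub_mem (sdiff_mem F _ _ _) (sdiff_mem F _ _ _)))
  · have h : sMulS F u i r j - sMulS F u i t j = (2 : F) • (sHat F r j - sHat F t j) := by
      unfold sMulS
      rw [if_neg hij, if_neg hij]
      unfold sSum; module
    rw [h]
    exact Submodule.smul_mem _ _ (sdiff_mem F j r t)

lemma hmul_single (b c : HatB) :
    hmul F (Finsupp.single b 1) (Finsupp.single c 1) = mulB F b c := by
  unfold hmul hatMul
  simp [Finsupp.lift_apply, Finsupp.sum_single_index]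

noncomputable def mulBS (b : HatB) (r : ZMod 3) (j : ℕ) : HatH F :=
  match b with
  | .a i => aMulS F i r j
  | .s0 m => sMulS F 0 (m : ℕ) r j
  | .s1 m => sMulS F 1 (3 * (m : ℕ)) r j
  | .s2 m => sMulS F 2 (3 * (m : ℕ)) r j

lemma hmul_sHat (b : HatB) (r : ZMod 3) (k : ℕ) (hk : 0 < k) :
    hmul F (Finsupp.single b 1) (sHat F r (3 * k)) = mulBS F b r (3 * k) := by
  rcases zmod3_cases r with rfl | rfl | rfl
  · rw [sHat0_eq F k hk, hmul_single]
    cases b with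
    | a i => rfl
    | s0 m => rfl
    | s1 m => exact sMulS_comm F 0 (3 * k) 1 (3 * (m : ℕ))
    | s2 m => exact sMulS_comm F 0 (3 * k) 2 (3 * (m : ℕ))
  · rw [sHat1_eq F k hk, hmul_single]
    cases b with
    | a i => rfl
    | s0 m => rfl
    | s1 m => rfl
    | s2 m => exact sMulS_comm F 1 (3 * k) 2 (3 * (m : ℕ))
  · rw [sHat2_eq F k hk, hmul_single]
    cases b <;> rfl

lemma mulBS_diff_mem (b : HatB) (r t : ZMod 3) (j : ℕ) :
    mulBS F b r j - mulBS F b t j ∈ idealI F := by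
  cases b with
  | a i => exact aMulS_diff_mem F i r t j
  | s0 m => exact sMulS_diff_mem F 0 (m : ℕ) r t j
  | s1 m => exact sMulS_diff_mem F 1 (3 * (m : ℕ)) r t j
  | s2 m => exact sMulS_diff_mem F 2 (3 * (m : ℕ)) r t j

lemma gen_single_mem (b : HatB) (r t : ZMod 3) (k : ℕ) (hk : 0 < k) :
    hmul F (Finsupp.single b 1) (sHat F r (3 * k) - sHat F t (3 * k)) ∈ idealI F := by
  have h : hmul F (Finsupp.single b 1) (sHat F r (3 * k) - sHat F t (3 * k)) =
      hmul F (Finsupp.single b 1) (sHat F r (3 * k))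
        - hmul F (Finsupp.single b 1) (sHat F t (3 * k)) :=
    map_sub (hatMul F (Finsupp.single b 1)) _ _
  rw [h, hmul_sHat F b r k hk, hmul_sHat F b t k hk]
  exact mulBS_diff_mem F b r t (3 * k)

lemma gen_mem (x : HatH F) (r t : ZMod 3) (k : ℕ) (hk : 0 < k) :
    hmul F x (sHat F r (3 * k) - sHat F t (3 * k)) ∈ idealI F := by
  induction x using Finsupp.induction_linear with
  | zero => rw [show hmul F 0 _ = 0 from congrFun (congrArg _ (map_zero (hatMul F))) _]
            exact (idealI F).zero_mem
  | add f g hf hg =>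
      rw [show hmul F (f + g) _ = hmul F f _ + hmul F g _ from
        congrFun (congrArg _ (map_add (hatMul F) f g)) _]
      exact add_mem hf hg
  | single a c =>
      rw [show (Finsupp.single a c : HatH F) = c • Finsupp.single a 1 by
        rw [Finsupp.smul_single, smul_eq_mul, mul_one]]
      rw [show hmul F (c • Finsupp.single a 1) _ = c • hmul F (Finsupp.single a 1) _ from
        congrFun (congrArg _ (map_smul (hatMul F) c _)) _]
      exact Submodule.smul_mem _ _ (gen_single_mem F a r t k hk)

lemma fHat_single (b : HatB) : fHat F (Finsupp.single b 1) = fHatB F b := by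
  unfold fHat
  simp [Finsupp.lift_apply, Finsupp.sum_single_index]


/-- The subspace `I` is an ideal of `Ĥ` and is invariant under `f̂`. -/
theorem idealI_is_ideal [CharP F 5] :
    (∀ x : HatH F, ∀ y ∈ idealI F, hmul F x y ∈ idealI F) ∧
      (∀ y ∈ idealI F, fHat F y ∈ idealI F) := by
  constructor
  · intro x y hy
    induction hy using Submodule.span_induction with
    | mem g hg =>
        obtain ⟨k, hk, h | h | h⟩ := hg <;> subst h
        · exact gen_mem F x 0 1 k hk
        · exact gen_mem F x 0 2 k hk
        · exact gen_mem F x 1 2 k hk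
    | zero => rw [show hmul F x 0 = 0 from map_zero (hatMul F x)]; exact (idealI F).zero_mem
    | add u v _ _ hu hv =>
        rw [show hmul F x (u + v) = hmul F x u + hmul F x v from map_add (hatMul F x) u v]
        exact add_mem hu hv
    | smul c u _ hu =>
        rw [show hmul F x (c • u) = c • hmul F x u from map_smul (hatMul F x) c u]
        exact Submodule.smul_mem _ _ hu
  · intro y hy
    induction hy using Submodule.span_induction with
    | mem g hg =>
        obtain ⟨k, hk, h | h | h⟩ := hg <;> subst h <;> rw [map_sub]
        · rw [sHat0_eq F k hk, sHat1_eq F k hk, fHat_single, fHat_single]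
          exact sdiff_mem F (3 * k) 1 0
        · rw [sHat0_eq F k hk, sHat2_eq F k hk, fHat_single, fHat_single]
          exact sdiff_mem F (3 * k) 1 2
        · rw [sHat1_eq F k hk, sHat2_eq F k hk, fHat_single, fHat_single]
          exact sdiff_mem F (3 * k) 0 2
    | zero => rw [map_zero]; exact (idealI F).zero_mem
    | add u v _ _ hu hv => rw [map_add]; exact add_mem hu hv
    | smul c u _ hu => rw [map_smul]; exact Submodule.smul_mem _ _ hu

end HatAlgebra
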